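/- For integers r,s ≥ 2, the shuffle product identity holds: ζ^{o}(r) · ζ^{o}(s) = Σ_{i+j=r+s, i≥2, j≥1} [ C(i−1,r−1) + C(i−1,s−1) ] ζ^{eo}(i,j), where ζ^{o}(k) = Σ_{n odd>0} 1/n^k and ζ^{eo}(i,j) = Σ_{m>n>0, m even, n odd} 1/(m^i n^j). -/

import Mathlib

/-- ζ^{o}(k) = Σ_{n>0 odd} 1/n^k -/
noncomputable def zetaO (k : ℕ) : ℝ :=
  ∑' n : {n : ℕ // 0 < n ∧ Odd n}, 1 / ((n : ℕ) : ℝ) ^ k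

/-- ζ^{e}(k) = Σ_{n>0 even} 1/n^k -/
noncomputable def zetaE (k : ℕ) : ℝ :=
  ∑' n : {n : ℕ // 0 < n ∧ Even n}, 1 / ((n : ℕ) : ℝ) ^ k

/-- ζ^{eo}(r,s) -/
noncomputable def dzetaEO (r s : ℕ) : ℝ :=
  ∑' p : {p : ℕ × ℕ // p.2 < p.1 ∧ 0 < p.2 ∧ Even p.1 ∧ Odd p.2},
    1 / ((p.1.1 : ℝ) ^ r * (p.1.2 : ℝ) ^ s)

/-- ζ^{oe}(r,s) -/
noncomputable def dzetaOE (r s : ℕ) : ℝ :=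
  ∑' p : {p : ℕ × ℕ // p.2 < p.1 ∧ 0 < p.2 ∧ Odd p.1 ∧ Even p.2},
    1 / ((p.1.1 : ℝ) ^ r * (p.1.2 : ℝ) ^ s)

/-- ζ^{oo}(r,s) -/
noncomputable def dzetaOO (r s : ℕ) : ℝ :=
  ∑' p : {p : ℕ × ℕ // p.2 < p.1 ∧ 0 < p.2 ∧ Odd p.1 ∧ Odd p.2},
    1 / ((p.1.1 : ℝ) ^ r * (p.1.2 : ℝ) ^ s)



lemma pf_zero (b : ℕ) (x y : ℝ) (hx : 0 < x) (hy : 0 < y) :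
    1/(x^1 * y^(b+1)) = ∑ i ∈ Finset.Icc 1 (b+1),
      (((i-1).choose 0 : ℝ)/((x+y)^i * y^(b+2-i)) + ((i-1).choose b : ℝ)/((x+y)^i * x^(b+2-i))) := by
  have hx0 : x ≠ 0 := hx.ne'
  have hy0 : y ≠ 0 := hy.ne'
  have hz0 : x + y ≠ 0 := by positivity
  induction b with
  | zero =>
    simp only [Finset.Icc_self, Finset.sum_singleton]
    norm_num
    field_simp
  | succ b ih =>
    calc 1/(x^1 * y^(b+1+1))
        = 1/(x+y) * (1/y^(b+2)) + 1/(x+y) * (1/(x^1 * y^(b+1))) := by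
          field_simp
          ring
      _ = 1/((x+y)^1 * y^(b+1+2-1)) + ∑ i ∈ Finset.Icc 1 (b+1), (1/(x+y)) *
            (((i-1).choose 0 : ℝ)/((x+y)^i * y^(b+2-i)) + ((i-1).choose b : ℝ)/((x+y)^i * x^(b+2-i))) := by
          rw [ih, Finset.mul_sum]
          norm_num
          ring
      _ = 1/((x+y)^1 * y^(b+1+2-1)) + ∑ i ∈ Finset.Icc 1 (b+1),
            ((((i+1)-1).choose 0 : ℝ)/((x+y)^(i+1) * y^(b+1+2-(i+1))) + (((i+1)-1).choose (b+1) : ℝ)/((x+y)^(i+1) * x^(b+1+2-(i+1)))) := by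
          congr 1
          refine Finset.sum_congr rfl fun i hi => ?_
          simp only [Finset.mem_Icc] at hi
          obtain ⟨h1, h2⟩ := hi
          obtain ⟨j, rfl⟩ : ∃ j, i = j + 1 := ⟨i - 1, by omega⟩
          have e1 : b + 2 - (j+1) = b + 1 - j := by omega
          have e2 : b + 1 + 2 - (j + 1 + 1) = b + 1 - j := by omega
          have e3 : j + 1 + 1 - 1 = j + 1 := by omega
          have e4 : j + 1 - 1 = j := by omega
          rw [e1, e2, e3, e4]
          have hc : (j+1).choose (b+1) = j.choose b := by
            rw [Nat.choose_succ_succ]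
            rw [Nat.choose_eq_zero_of_lt (by omega : j < b + 1)]
            omega
          rw [hc, Nat.choose_zero_right, Nat.choose_zero_right]
          push_cast
          field_simp
          ring
      _ = 1/((x+y)^1 * y^(b+1+2-1)) + ∑ i ∈ Finset.Icc 2 (b+2),
            (((i-1).choose 0 : ℝ)/((x+y)^i * y^(b+1+2-i)) + ((i-1).choose (b+1) : ℝ)/((x+y)^i * x^(b+1+2-i))) := by
          rw [← Finset.map_add_right_Icc 1 (b+1) 1, Finset.sum_map]
          simp [addRightEmbedding_apply]
      _ = ∑ i ∈ Finset.Icc 1 (b+1+1),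
            (((i-1).choose 0 : ℝ)/((x+y)^i * y^(b+1+2-i)) + ((i-1).choose (b+1) : ℝ)/((x+y)^i * x^(b+1+2-i))) := by
          have hins : Finset.Icc 1 (b+2) = insert 1 (Finset.Icc 2 (b+2)) := by
            ext i; simp [Finset.mem_Icc]; omega
          rw [show b+1+1 = b+2 from rfl, hins, Finset.sum_insert (by simp [Finset.mem_Icc])]
          norm_num [Nat.choose_eq_zero_of_lt (show 0 < b + 1 by omega)]

lemma pf_key (a : ℕ) : ∀ (b : ℕ) (x y : ℝ), 0 < x → 0 < y →
    1/(x^(a+1) * y^(b+1)) = ∑ i ∈ Finset.Icc 1 (a+b+1),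
      (((i-1).choose a : ℝ)/((x+y)^i * y^(a+b+2-i)) + ((i-1).choose b : ℝ)/((x+y)^i * x^(a+b+2-i))) := by
  induction a with
  | zero =>
    intro b x y hx hy
    simpa using pf_zero b x y hx hy
  | succ a iha =>
    intro b
    induction b with
    | zero =>
      intro x y hx hy
      have h := pf_zero (a+1) y x hy hx
      rw [show x^(a+1+1) * y^(0+1) = y^1 * x^(a+1+1) by ring, h, add_comm y x]
      exact Finset.sum_congr rfl fun i _ => add_comm _ _
    | succ b ihb =>
      intro x y hx hy
      have hx0 : x ≠ 0 := hx.ne'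
      have hy0 : y ≠ 0 := hy.ne'
      have hz0 : x + y ≠ 0 := by positivity
      simp only [show a + 1 + (b + 1) + 1 = a + b + 3 from by omega,
        show a + 1 + (b + 1) + 2 = a + b + 4 from by omega]
      have ihA := iha (b+1) x y hx hy
      have ihB := ihb x y hx hy
      simp only [show a + (b + 1) + 1 = a + b + 2 from by omega,
        show a + (b + 1) + 2 = a + b + 3 from by omega] at ihA
      simp only [show a + 1 + b + 1 = a + b + 2 from by omega,
        show a + 1 + b + 2 = a + b + 3 from by omega] at ihB
      calc 1/(x^(a+1+1) * y^(b+1+1))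
          = 1/(x+y) * (1/(x^(a+1) * y^(b+1+1)) + 1/(x^(a+1+1) * y^(b+1))) := by
            field_simp
            ring
        _ = ∑ i ∈ Finset.Icc 1 (a+b+2), (1/(x+y)) *
              ((((i-1).choose a : ℝ)/((x+y)^i * y^(a+b+3-i)) + ((i-1).choose (b+1) : ℝ)/((x+y)^i * x^(a+b+3-i)))
              + (((i-1).choose (a+1) : ℝ)/((x+y)^i * y^(a+b+3-i)) + ((i-1).choose b : ℝ)/((x+y)^i * x^(a+b+3-i)))) := by
            rw [ihA, ihB, ← Finset.sum_add_distrib, Finset.mul_sum]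
        _ = ∑ i ∈ Finset.Icc 1 (a+b+2),
              ((((i+1-1).choose (a+1) : ℝ)/((x+y)^(i+1) * y^(a+b+4-(i+1))) + (((i+1-1)).choose (b+1) : ℝ)/((x+y)^(i+1) * x^(a+b+4-(i+1)))) ) := by
            refine Finset.sum_congr rfl fun i hi => ?_
            simp only [Finset.mem_Icc] at hi
            obtain ⟨j, rfl⟩ : ∃ j, i = j + 1 := ⟨i - 1, by omega⟩
            rw [show j + 1 - 1 = j from rfl, show j + 1 + 1 - 1 = j + 1 from rfl,
              show a + b + 3 - (j+1) = a + b + 2 - j from by omega,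
              show a + b + 4 - (j+1+1) = a + b + 2 - j from by omega,
              Nat.choose_succ_succ j a, Nat.choose_succ_succ j b]
            push_cast
            field_simp
            ring
        _ = ∑ i ∈ Finset.Icc 2 (a+b+3),
              (((i-1).choose (a+1) : ℝ)/((x+y)^i * y^(a+b+4-i)) + ((i-1).choose (b+1) : ℝ)/((x+y)^i * x^(a+b+4-i))) := by
            rw [← Finset.map_add_right_Icc 1 (a+b+2) 1, Finset.sum_map]
            simp [addRightEmbedding_apply]
        _ = ∑ i ∈ Finset.Icc 1 (a+b+3),
              (((i-1).choose (a+1) : ℝ)/((x+y)^i * y^(a+b+4-i)) + ((i-1).choose (b+1) : ℝ)/((x+y)^i * x^(a+b+4-i))) := by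
            have hins : Finset.Icc 1 (a+b+3) = insert 1 (Finset.Icc 2 (a+b+3)) := by
              ext i; simp [Finset.mem_Icc]; omega
            rw [hins, Finset.sum_insert (by simp [Finset.mem_Icc])]
            norm_num [Nat.choose_eq_zero_of_lt (show 0 < a + 1 by omega),
              Nat.choose_eq_zero_of_lt (show 0 < b + 1 by omega)]

set_option maxHeartbeats 1000000 in
lemma sumB (i j : ℕ) (hi : 2 ≤ i) (hij : 4 ≤ i + j) :
    Summable (fun p : {p : ℕ × ℕ // p.2 < p.1 ∧ 0 < p.2 ∧ Even p.1 ∧ Odd p.2} =>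
      1 / ((p.1.1 : ℝ) ^ i * (p.1.2 : ℝ) ^ j)) := by
  have h2 : Summable (fun n : ℕ => 1/(n:ℝ)^2) := Real.summable_one_div_nat_pow.mpr (by norm_num)
  have hg : Summable (fun p : ℕ × ℕ => (1/(p.1:ℝ)^2) * (1/(p.2:ℝ)^2)) :=
    h2.mul_of_nonneg h2 (fun n => by positivity) (fun n => by positivity)
  have hsub := hg.subtype {p : ℕ × ℕ | p.2 < p.1 ∧ 0 < p.2 ∧ Even p.1 ∧ Odd p.2}
  refine Summable.of_nonneg_of_le (fun p => by positivity) (fun p => ?_) hsub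
  obtain ⟨⟨M, n⟩, hMn, hn, hM, hodd⟩ := p
  simp only [Function.comp_apply]
  have hn1 : (1:ℝ) ≤ (n:ℝ) := by exact_mod_cast hn
  have hnM : (n:ℝ) ≤ (M:ℝ) := by exact_mod_cast hMn.le
  have hM1 : (1:ℝ) ≤ (M:ℝ) := le_trans hn1 hnM
  have key : (M:ℝ)^2 * (n:ℝ)^2 ≤ (M:ℝ)^i * (n:ℝ)^j := by
    have hMi : (M:ℝ)^i = (M:ℝ)^2 * (M:ℝ)^(i-2) := by
      rw [← pow_add, show 2 + (i-2) = i from by omega]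
    have hle1 : (n:ℝ)^2 ≤ (n:ℝ)^(i+j-2) := pow_le_pow_right₀ hn1 (by omega)
    have hnij : (n:ℝ)^(i+j-2) = (n:ℝ)^(i-2) * (n:ℝ)^j := by
      rw [← pow_add, show i-2+j = i+j-2 from by omega]
    have hle2 : (n:ℝ)^(i-2) ≤ (M:ℝ)^(i-2) := pow_le_pow_left₀ (by linarith) hnM _
    have h0M : (0:ℝ) ≤ (M:ℝ)^2 := by positivity
    have h0j : (0:ℝ) ≤ (n:ℝ)^j := by positivity
    calc (M:ℝ)^2 * (n:ℝ)^2 ≤ (M:ℝ)^2 * (n:ℝ)^(i+j-2) :=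
          mul_le_mul_of_nonneg_left hle1 h0M
      _ = (M:ℝ)^2 * ((n:ℝ)^(i-2) * (n:ℝ)^j) := by rw [hnij]
      _ ≤ (M:ℝ)^2 * ((M:ℝ)^(i-2) * (n:ℝ)^j) :=
          mul_le_mul_of_nonneg_left (mul_le_mul_of_nonneg_right hle2 h0j) h0M
      _ = (M:ℝ)^i * (n:ℝ)^j := by rw [hMi]; ring
  calc 1 / ((M:ℝ)^i * (n:ℝ)^j) ≤ 1 / ((M:ℝ)^2 * (n:ℝ)^2) :=
        one_div_le_one_div_of_le (by positivity) key
    _ = 1/(M:ℝ)^2 * (1/(n:ℝ)^2) := by rw [one_div_mul_one_div]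

def eOne : ({n : ℕ // 0 < n ∧ Odd n} × {n : ℕ // 0 < n ∧ Odd n}) ≃
    {p : ℕ × ℕ // p.2 < p.1 ∧ 0 < p.2 ∧ Even p.1 ∧ Odd p.2} where
  toFun z := ⟨(z.1.1 + z.2.1, z.2.1),
    ⟨by have := z.1.2.1; omega, z.2.2.1, z.1.2.2.add_odd z.2.2.2, z.2.2.2⟩⟩
  invFun p := (⟨p.1.1 - p.1.2, Nat.sub_pos_of_lt p.2.1,
      Nat.Even.sub_odd p.2.1.le p.2.2.2.1 p.2.2.2.2⟩,
    ⟨p.1.2, p.2.2.1, p.2.2.2.2⟩)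
  left_inv z := by
    ext
    · simp
    · simp
  right_inv p := by
    ext
    · simp [Nat.sub_add_cancel p.2.1.le]
    · simp

def eTwo : ({n : ℕ // 0 < n ∧ Odd n} × {n : ℕ // 0 < n ∧ Odd n}) ≃
    {p : ℕ × ℕ // p.2 < p.1 ∧ 0 < p.2 ∧ Even p.1 ∧ Odd p.2} where
  toFun z := ⟨(z.1.1 + z.2.1, z.1.1),
    ⟨by have := z.2.2.1; omega, z.1.2.1, z.1.2.2.add_odd z.2.2.2, z.1.2.2⟩⟩
  invFun p := (⟨p.1.2, p.2.2.1, p.2.2.2.2⟩,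
    ⟨p.1.1 - p.1.2, Nat.sub_pos_of_lt p.2.1,
      Nat.Even.sub_odd p.2.1.le p.2.2.2.1 p.2.2.2.2⟩)
  left_inv z := by
    ext
    · simp
    · simp
  right_inv p := by
    ext
    · simp [Nat.add_sub_cancel' p.2.1.le]
    · simp

lemma pf_key2 (a b : ℕ) (x y : ℝ) (hx : 0 < x) (hy : 0 < y) :
    1/(x^(a+2) * y^(b+2)) = ∑ i ∈ Finset.Icc 2 (a+b+3),
      (((i-1).choose (a+1) : ℝ) * (1/((x+y)^i * y^(a+b+4-i))) +
       ((i-1).choose (b+1) : ℝ) * (1/((x+y)^i * x^(a+b+4-i)))) := by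
  have h := pf_key (a+1) (b+1) x y hx hy
  simp only [show a+1+(b+1)+1 = a+b+3 from by omega, show a+1+(b+1)+2 = a+b+4 from by omega,
    show a+1+1 = a+2 from by omega, show b+1+1 = b+2 from by omega] at h
  rw [h]
  have hins : Finset.Icc 1 (a+b+3) = insert 1 (Finset.Icc 2 (a+b+3)) := by
    ext i; simp [Finset.mem_Icc]; omega
  rw [hins, Finset.sum_insert (by simp [Finset.mem_Icc])]
  rw [show ((1:ℕ)-1).choose (a+1) = 0 from Nat.choose_eq_zero_of_lt (by omega),
    show ((1:ℕ)-1).choose (b+1) = 0 from Nat.choose_eq_zero_of_lt (by omega)]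
  simp only [Nat.cast_zero, zero_div, zero_add, add_zero]
  exact Finset.sum_congr rfl fun i _ => by ring

set_option maxHeartbeats 2000000 in
theorem shuffle_oo (r s : ℕ) (hr : 2 ≤ r) (hs : 2 ≤ s) :
    zetaO r * zetaO s =
      ∑ i ∈ Finset.Icc 2 (r + s - 1),
        (((i - 1).choose (r - 1) : ℝ) + ((i - 1).choose (s - 1) : ℝ)) *
          dzetaEO i (r + s - i) := by
  obtain ⟨a, rfl⟩ : ∃ a, r = a + 2 := ⟨r - 2, by omega⟩
  obtain ⟨b, rfl⟩ : ∃ b, s = b + 2 := ⟨s - 2, by omega⟩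
  simp only [show a+2+(b+2) = a+b+4 from by omega, show a+2-1 = a+1 from by omega,
    show b+2-1 = b+1 from by omega, show a+b+4-1 = a+b+3 from by omega]
  have hA : ∀ k : ℕ, 2 ≤ k → Summable (fun n : {n : ℕ // 0 < n ∧ Odd n} => ‖1/((n:ℕ):ℝ)^k‖) := by
    intro k hk
    have h := (Real.summable_one_div_nat_pow.mpr (by omega : 1 < k)).subtype {n : ℕ | 0 < n ∧ Odd n}
    refine h.congr fun n => ?_
    simp only [Function.comp_apply]
    exact (Real.norm_of_nonneg (by positivity)).symm
  have hS1 : ∀ i ∈ Finset.Icc 2 (a+b+3),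
      Summable (fun z : {n : ℕ // 0 < n ∧ Odd n} × {n : ℕ // 0 < n ∧ Odd n} =>
        1/(((eOne z).1.1 : ℝ)^i * ((eOne z).1.2 : ℝ)^(a+b+4-i))) := by
    intro i hi
    simp only [Finset.mem_Icc] at hi
    exact (Equiv.summable_iff eOne).mpr (sumB i (a+b+4-i) hi.1 (by omega))
  have hS2 : ∀ i ∈ Finset.Icc 2 (a+b+3),
      Summable (fun z : {n : ℕ // 0 < n ∧ Odd n} × {n : ℕ // 0 < n ∧ Odd n} =>
        1/(((eTwo z).1.1 : ℝ)^i * ((eTwo z).1.2 : ℝ)^(a+b+4-i))) := by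
    intro i hi
    simp only [Finset.mem_Icc] at hi
    exact (Equiv.summable_iff eTwo).mpr (sumB i (a+b+4-i) hi.1 (by omega))
  calc zetaO (a+2) * zetaO (b+2)
      = ∑' z : {n : ℕ // 0 < n ∧ Odd n} × {n : ℕ // 0 < n ∧ Odd n},
          (1/((z.1 : ℕ):ℝ)^(a+2)) * (1/((z.2 : ℕ):ℝ)^(b+2)) := by
        unfold zetaO
        exact tsum_mul_tsum_of_summable_norm (hA (a+2) (by omega)) (hA (b+2) (by omega))
    _ = ∑' z : {n : ℕ // 0 < n ∧ Odd n} × {n : ℕ // 0 < n ∧ Odd n},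
          ∑ i ∈ Finset.Icc 2 (a+b+3),
          (((i-1).choose (a+1) : ℝ) * (1/(((eOne z).1.1:ℝ)^i * ((eOne z).1.2:ℝ)^(a+b+4-i)))
           + ((i-1).choose (b+1) : ℝ) * (1/(((eTwo z).1.1:ℝ)^i * ((eTwo z).1.2:ℝ)^(a+b+4-i)))) := by
        refine tsum_congr fun z => ?_
        obtain ⟨⟨m, hm, hmo⟩, ⟨n, hn, hno⟩⟩ := z
        have hx : (0:ℝ) < (m:ℝ) := by exact_mod_cast hm
        have hy : (0:ℝ) < (n:ℝ) := by exact_mod_cast hn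
        rw [show (1/((m:ℝ))^(a+2)) * (1/((n:ℝ))^(b+2)) = 1/((m:ℝ)^(a+2) * (n:ℝ)^(b+2)) from
          by rw [one_div_mul_one_div], pf_key2 a b _ _ hx hy]
        refine Finset.sum_congr rfl fun i _ => ?_
        simp only [eOne, eTwo, Equiv.coe_fn_mk]
        push_cast
        ring
    _ = ∑ i ∈ Finset.Icc 2 (a+b+3),
          ∑' z : {n : ℕ // 0 < n ∧ Odd n} × {n : ℕ // 0 < n ∧ Odd n},
          (((i-1).choose (a+1) : ℝ) * (1/(((eOne z).1.1:ℝ)^i * ((eOne z).1.2:ℝ)^(a+b+4-i)))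
           + ((i-1).choose (b+1) : ℝ) * (1/(((eTwo z).1.1:ℝ)^i * ((eTwo z).1.2:ℝ)^(a+b+4-i)))) :=
        Summable.tsum_finsetSum (fun i hi => (((hS1 i hi).mul_left _)).add ((hS2 i hi).mul_left _))
    _ = ∑ i ∈ Finset.Icc 2 (a+b+3),
          (((i-1).choose (a+1) : ℝ) + ((i-1).choose (b+1) : ℝ)) * dzetaEO i (a+b+4-i) := by
        refine Finset.sum_congr rfl fun i hi => ?_
        rw [Summable.tsum_add ((hS1 i hi).mul_left _) ((hS2 i hi).mul_left _), tsum_mul_left, tsum_mul_left,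
          Equiv.tsum_eq eOne (fun p : {p : ℕ × ℕ // p.2 < p.1 ∧ 0 < p.2 ∧ Even p.1 ∧ Odd p.2} =>
            1/((p.1.1:ℝ)^i * (p.1.2:ℝ)^(a+b+4-i))),
          Equiv.tsum_eq eTwo (fun p : {p : ℕ × ℕ // p.2 < p.1 ∧ 0 < p.2 ∧ Even p.1 ∧ Odd p.2} =>
            1/((p.1.1:ℝ)^i * (p.1.2:ℝ)^(a+b+4-i)))]
        unfold dzetaEO
        ring
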